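/- If 𝒜 is a bounded, irreducible family of subadditive, order-preserving, homogeneous maps on ℝⁿ_{≥0} with generalized spectral radius r(𝒜) = 1, then the semigroup 𝒜⁺ = ⋃_{m>0} 𝒜^m is bounded (i.e., sup_{f ∈ 𝒜⁺} ‖f‖ < ∞). -/

import Mathlib

open Filter Topology Set

noncomputable section

/-- A wedge in a real normed space: a convex set closed under positive scalar multiplication. -/
def IsWedge {X : Type*} [NormedAddCommGroup X] [NormedSpace ℝ X] (W : Set X) : Prop :=
  Convex ℝ W ∧ ∀ c : ℝ, 0 < c → ∀ x ∈ W, c • x ∈ W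

/-- A closed cone: closed, convex, closed under positive scalar multiplication, K ∩ (−K) = {0}. -/
def IsClosedCone {X : Type*} [NormedAddCommGroup X] [NormedSpace ℝ X] (K : Set X) : Prop :=
  IsClosed K ∧ Convex ℝ K ∧ (∀ c : ℝ, 0 < c → ∀ x ∈ K, c • x ∈ K) ∧ K ∩ (-K) = {0}

/-- A polyhedral cone: intersection of finitely many closed halfspaces through the origin. -/
def IsPolyhedralCone {X : Type*} [NormedAddCommGroup X] [NormedSpace ℝ X] (K : Set X) : Prop :=
  ∃ (k : ℕ) (φ : Fin k → (X →ₗ[ℝ] ℝ)), K = {x | ∀ i, 0 ≤ φ i x}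

/-- `f` maps `W` into itself and is positively homogeneous on `W`. -/
def HomogOn {X : Type*} [NormedAddCommGroup X] [NormedSpace ℝ X] (f : X → X) (W : Set X) : Prop :=
  Set.MapsTo f W W ∧ ∀ c : ℝ, 0 < c → ∀ x ∈ W, f (c • x) = c • f x

/-- `f` is order-preserving with respect to the order induced by the cone `K`. -/
def OrderPresOn {X : Type*} [NormedAddCommGroup X] [NormedSpace ℝ X] (f : X → X) (K : Set X) : Prop :=
  ∀ x ∈ K, ∀ y ∈ K, y - x ∈ K → f y - f x ∈ K

/-- `f` is subadditive on `K`: f(x+y) ≤ f(x)+f(y) in the cone order. -/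
def SubaddOn {X : Type*} [NormedAddCommGroup X] [NormedSpace ℝ X] (f : X → X) (K : Set X) : Prop :=
  ∀ x ∈ K, ∀ y ∈ K, (f x + f y) - f (x + y) ∈ K

/-- The norm of a homogeneous map on `W`: sup of ‖f x‖ over unit vectors of `W`. -/
def opNormW {X : Type*} [NormedAddCommGroup X] (f : X → X) (W : Set X) : ℝ :=
  sSup ((fun x => ‖f x‖) '' {x ∈ W | ‖x‖ = 1})

/-- A bounded homogeneous map on `W`. -/
def BoundedMapOn {X : Type*} [NormedAddCommGroup X] (f : X → X) (W : Set X) : Prop :=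
  ∃ C : ℝ, ∀ x ∈ W, ‖f x‖ ≤ C * ‖x‖

/-- A bounded family of homogeneous maps on `W`. -/
def BoundedFamOn {X : Type*} [NormedAddCommGroup X] (A : Set (X → X)) (W : Set X) : Prop :=
  ∃ C : ℝ, ∀ f ∈ A, ∀ x ∈ W, ‖f x‖ ≤ C * ‖x‖

/-- `famPow A m` = 𝒜^m, the set of m-fold compositions of maps from `A` (with 𝒜^0 = {id}). -/
def famPow {X : Type*} (A : Set (X → X)) : ℕ → Set (X → X)
  | 0 => {id}
  | m + 1 => {h | ∃ f ∈ A, ∃ g ∈ famPow A m, h = f ∘ g}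

/-- The composition of two families of maps. -/
def compFam {X : Type*} (A B : Set (X → X)) : Set (X → X) :=
  {h | ∃ f ∈ A, ∃ g ∈ B, h = f ∘ g}

/-- The Bonsall cone spectral radius r(f) = inf_{n>0} ‖f^n‖^{1/n}. -/
def coneSpecRad {X : Type*} [NormedAddCommGroup X] (f : X → X) (W : Set X) : ℝ :=
  ⨅ n : ℕ+, (opNormW (f^[(n : ℕ)]) W) ^ (((n : ℕ) : ℝ)⁻¹)

/-- sup_{f ∈ 𝒜^m} ‖f‖^{1/m}. -/
def jointTerm {X : Type*} [NormedAddCommGroup X] (A : Set (X → X)) (W : Set X) (m : ℕ) : ℝ :=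
  sSup ((fun f => (opNormW f W) ^ ((m : ℝ)⁻¹)) '' famPow A m)

/-- sup_{f ∈ 𝒜^m} r(f)^{1/m}. -/
def genTerm {X : Type*} [NormedAddCommGroup X] (A : Set (X → X)) (W : Set X) (m : ℕ) : ℝ :=
  sSup ((fun f => (coneSpecRad f W) ^ ((m : ℝ)⁻¹)) '' famPow A m)

/-- The joint spectral radius r̂(𝒜) = inf_{m>0} sup_{f ∈ 𝒜^m} ‖f‖^{1/m}. -/
def jointRad {X : Type*} [NormedAddCommGroup X] (A : Set (X → X)) (W : Set X) : ℝ :=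
  ⨅ m : ℕ+, jointTerm A W (m : ℕ)

/-- The generalized spectral radius r(𝒜) = sup_{m>0} sup_{f ∈ 𝒜^m} r(f)^{1/m}. -/
def genRad {X : Type*} [NormedAddCommGroup X] (A : Set (X → X)) (W : Set X) : ℝ :=
  ⨆ m : ℕ+, genTerm A W (m : ℕ)

/-- β_m = inf_{f ∈ 𝒜^m} ‖f‖. -/
def subBeta {X : Type*} [NormedAddCommGroup X] (A : Set (X → X)) (W : Set X) (m : ℕ) : ℝ :=
  sInf ((fun f => opNormW f W) '' famPow A m)

/-- γ_m = inf_{f ∈ 𝒜^m} r(f). -/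
def subGamma {X : Type*} [NormedAddCommGroup X] (A : Set (X → X)) (W : Set X) (m : ℕ) : ℝ :=
  sInf ((fun f => coneSpecRad f W) '' famPow A m)

/-- F_m^d = f_m ∘ ⋯ ∘ f_1 for a sequence d of maps. -/
def seqComp {X : Type*} (d : ℕ → X → X) : ℕ → X → X
  | 0 => id
  | m + 1 => d m ∘ seqComp d m

/-- The standard cone ℝⁿ_{≥0}. -/
def stdCone (n : ℕ) : Set (Fin n → ℝ) := {x | ∀ i, 0 ≤ x i}

/-- The closed face F_J of the standard cone. -/
def stdFace {n : ℕ} (J : Set (Fin n)) : Set (Fin n → ℝ) :=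
  {x | (∀ i, 0 ≤ x i) ∧ ∀ i ∉ J, x i = 0}

/-- A family of maps on ℝⁿ_{≥0} is irreducible if no non-trivial closed face is invariant
under every member of the family. -/
def IrreducibleFam {n : ℕ} (A : Set ((Fin n → ℝ) → Fin n → ℝ)) : Prop :=
  ¬ ∃ J : Set (Fin n), J.Nonempty ∧ J ≠ Set.univ ∧ ∀ f ∈ A, Set.MapsTo f (stdFace J) (stdFace J)

namespace S10

variable {n : ℕ}

def ee (n : ℕ) (i : Fin n) : Fin n → ℝ := Pi.single i 1

def uu (n : ℕ) : Fin n → ℝ := fun _ => 1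

def Good (n : ℕ) (f : (Fin n → ℝ) → Fin n → ℝ) : Prop :=
  Set.MapsTo f (stdCone n) (stdCone n) ∧
  (∀ c : ℝ, 0 < c → ∀ x ∈ stdCone n, f (c • x) = c • f x) ∧
  (∀ x ∈ stdCone n, ∀ y ∈ stdCone n, (∀ i, x i ≤ y i) → ∀ i, f x i ≤ f y i) ∧
  (∀ x ∈ stdCone n, ∀ y ∈ stdCone n, ∀ i, f (x + y) i ≤ f x i + f y i)

lemma cone_add {x y : Fin n → ℝ} (hx : x ∈ stdCone n) (hy : y ∈ stdCone n) :
    x + y ∈ stdCone n := fun i => add_nonneg (hx i) (hy i)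

lemma cone_smul {c : ℝ} (hc : 0 ≤ c) {x : Fin n → ℝ} (hx : x ∈ stdCone n) :
    c • x ∈ stdCone n := fun i => mul_nonneg hc (hx i)

lemma cone_zero : (0 : Fin n → ℝ) ∈ stdCone n := fun i => le_refl 0

lemma ee_mem (i : Fin n) : ee n i ∈ stdCone n := by
  intro j
  by_cases h : j = i <;> simp [ee, Pi.single_apply, h]

lemma uu_mem : uu n ∈ stdCone n := fun i => zero_le_one

lemma good_id : Good n id := by
  refine ⟨fun x hx => hx, fun c hc x hx => rfl, fun x hx y hy h i => h i, ?_⟩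
  intro x hx y hy i; simp

lemma good_comp {f g : (Fin n → ℝ) → Fin n → ℝ} (hf : Good n f) (hg : Good n g) :
    Good n (f ∘ g) := by
  obtain ⟨hfM, hfH, hfO, hfS⟩ := hf
  obtain ⟨hgM, hgH, hgO, hgS⟩ := hg
  refine ⟨hfM.comp hgM, ?_, ?_, ?_⟩
  · intro c hc x hx
    simp only [Function.comp_apply, hgH c hc x hx, hfH c hc _ (hgM hx)]
  · intro x hx y hy h i
    exact hfO _ (hgM hx) _ (hgM hy) (hgO x hx y hy h) i
  · intro x hx y hy i
    calc f (g (x + y)) i ≤ f (g x + g y) i :=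
          hfO _ (hgM (cone_add hx hy)) _ (cone_add (hgM hx) (hgM hy))
            (fun j => hgS x hx y hy j) i
      _ ≤ f (g x) i + f (g y) i := hfS _ (hgM hx) _ (hgM hy) i

lemma good_zero {f : (Fin n → ℝ) → Fin n → ℝ} (hf : Good n f) : f 0 = 0 := by
  have h := hf.2.1 2 (by norm_num) 0 cone_zero
  rw [smul_zero] at h
  funext i
  have := congrFun h i
  simp only [Pi.smul_apply, smul_eq_mul, Pi.zero_apply] at this ⊢
  linarith

lemma good_smul {f : (Fin n → ℝ) → Fin n → ℝ} (hf : Good n f) {c : ℝ} (hc : 0 ≤ c)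
    {x : Fin n → ℝ} (hx : x ∈ stdCone n) : f (c • x) = c • f x := by
  rcases hc.lt_or_eq with h | h
  · exact hf.2.1 c h x hx
  · rw [← h, zero_smul, zero_smul, good_zero hf]

lemma good_pow {A : Set ((Fin n → ℝ) → Fin n → ℝ)} (hA : ∀ f ∈ A, Good n f) :
    ∀ m, ∀ f ∈ famPow A m, Good n f := by
  intro m
  induction m with
  | zero => intro f hf; rw [famPow] at hf; simp at hf; subst hf; exact good_id
  | succ m ih =>
    rintro f ⟨p, hp, q, hq, rfl⟩
    exact good_comp (hA p hp) (ih q hq)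

lemma comp_mem {A : Set ((Fin n → ℝ) → Fin n → ℝ)} :
    ∀ a b (f g : (Fin n → ℝ) → Fin n → ℝ), f ∈ famPow A a → g ∈ famPow A b →
      f ∘ g ∈ famPow A (a + b) := by
  intro a
  induction a with
  | zero =>
    intro b f g hf hg
    rw [famPow] at hf; simp at hf; subst hf
    simpa using hg
  | succ a ih =>
    rintro b f g ⟨p, hp, q, hq, rfl⟩ hg
    have : (a + 1) + b = (a + b) + 1 := by omega
    rw [this]
    exact ⟨p, hp, q ∘ g, ih b q g hq hg, rfl⟩

lemma good_iterate {f : (Fin n → ℝ) → Fin n → ℝ} (hf : Good n f) (k : ℕ) :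
    Good n (f^[k]) := by
  induction k with
  | zero => exact good_id
  | succ k ih => rw [Function.iterate_succ']; exact good_comp hf ih


-- decomposition
lemma decomp (x : Fin n → ℝ) : (∑ j, x j • ee n j) = x := by
  funext k
  rw [Finset.sum_apply]
  simp [ee, Pi.single_apply]

lemma sum_mem_cone {x : Fin n → ℝ} (hx : x ∈ stdCone n) (s : Finset (Fin n)) :
    (∑ j ∈ s, x j • ee n j) ∈ stdCone n := by
  refine Finset.sum_induction _ (· ∈ stdCone n) (fun a b ha hb => cone_add ha hb) cone_zero ?_
  intro j _
  exact cone_smul (hx j) (ee_mem j)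

lemma sum_bound {f : (Fin n → ℝ) → Fin n → ℝ} (hf : Good n f) {x : Fin n → ℝ}
    (hx : x ∈ stdCone n) (i : Fin n) : f x i ≤ ∑ j, x j * f (ee n j) i := by
  have key : ∀ s : Finset (Fin n), f (∑ j ∈ s, x j • ee n j) i ≤ ∑ j ∈ s, x j * f (ee n j) i := by
    intro s
    induction s using Finset.induction with
    | empty => simp [good_zero hf]
    | insert a s' hns ih =>
      rw [Finset.sum_insert hns, Finset.sum_insert hns]
      calc f (x a • ee n a + ∑ j ∈ s', x j • ee n j) i
          ≤ f (x a • ee n a) i + f (∑ j ∈ s', x j • ee n j) i :=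
            hf.2.2.2 _ (cone_smul (hx a) (ee_mem a)) _ (sum_mem_cone hx s') i
        _ ≤ x a * f (ee n a) i + ∑ j ∈ s', x j * f (ee n j) i := by
            rw [good_smul hf (hx a) (ee_mem a)]
            exact add_le_add_left (le_of_eq rfl) _ |>.trans (add_le_add_right ih _)
  have := key Finset.univ
  rwa [decomp] at this

lemma coord_le_norm (x : Fin n → ℝ) (i : Fin n) : x i ≤ ‖x‖ :=
  (le_abs_self _).trans ((Real.norm_eq_abs _) ▸ norm_le_pi_norm x i)

lemma norm_le_of_cone {x : Fin n → ℝ} (hx : x ∈ stdCone n) {B : ℝ} (hB : 0 ≤ B)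
    (h : ∀ i, x i ≤ B) : ‖x‖ ≤ B := by
  refine (pi_norm_le_iff_of_nonneg hB).2 fun i => ?_
  rw [Real.norm_eq_abs, abs_of_nonneg (hx i)]
  exact h i

lemma norm_uu (hn : 0 < n) : ‖uu n‖ = 1 := by
  refine le_antisymm (norm_le_of_cone uu_mem zero_le_one fun i => le_refl 1) ?_
  have := coord_le_norm (uu n) ⟨0, hn⟩
  simpa [uu] using this

lemma norm_ee (i : Fin n) : ‖ee n i‖ = 1 := by
  refine le_antisymm (norm_le_of_cone (ee_mem i) zero_le_one fun j => ?_) ?_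
  · by_cases h : j = i <;> simp [ee, Pi.single_apply, h]
  · have := coord_le_norm (ee n i) i
    simpa [ee] using this

lemma bound_u {f : (Fin n → ℝ) → Fin n → ℝ} (hf : Good n f) {x : Fin n → ℝ}
    (hx : x ∈ stdCone n) : ‖f x‖ ≤ ‖f (uu n)‖ * ‖x‖ := by
  have h1 : ∀ i, f x i ≤ ‖x‖ * f (uu n) i := by
    intro i
    have hle : ∀ j, x j ≤ (‖x‖ • uu n) j := by
      intro j
      simp only [Pi.smul_apply, uu, smul_eq_mul, mul_one]
      exact coord_le_norm x j
    have h2 := hf.2.2.1 x hx _ (cone_smul (norm_nonneg x) uu_mem) hle i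
    rwa [good_smul hf (norm_nonneg x) uu_mem, Pi.smul_apply, smul_eq_mul] at h2
  refine norm_le_of_cone (hf.1 hx) (by positivity) fun i => ?_
  calc f x i ≤ ‖x‖ * f (uu n) i := h1 i
    _ ≤ ‖x‖ * ‖f (uu n)‖ := by
        exact mul_le_mul_of_nonneg_left (coord_le_norm _ i) (norm_nonneg x)
    _ = ‖f (uu n)‖ * ‖x‖ := mul_comm _ _

lemma opNormW_nonneg (f : (Fin n → ℝ) → Fin n → ℝ) (W : Set (Fin n → ℝ)) :
    0 ≤ opNormW f W := by
  apply Real.sSup_nonneg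
  rintro y ⟨x, _, rfl⟩
  exact norm_nonneg _

lemma opNormW_bddAbove {f : (Fin n → ℝ) → Fin n → ℝ} (hf : Good n f) :
    BddAbove ((fun x => ‖f x‖) '' {x ∈ stdCone n | ‖x‖ = 1}) := by
  refine ⟨‖f (uu n)‖, ?_⟩
  rintro y ⟨x, ⟨hx, hx1⟩, rfl⟩
  have := bound_u hf hx
  rwa [hx1, mul_one] at this

lemma opNormW_le {f : (Fin n → ℝ) → Fin n → ℝ} (hf : Good n f) :
    opNormW f (stdCone n) ≤ ‖f (uu n)‖ := by
  refine Real.sSup_le ?_ (norm_nonneg _)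
  rintro y ⟨x, ⟨hx, hx1⟩, rfl⟩
  have := bound_u hf hx
  rwa [hx1, mul_one] at this

lemma le_opNormW {f : (Fin n → ℝ) → Fin n → ℝ} (hf : Good n f) {x : Fin n → ℝ}
    (hx : x ∈ stdCone n) (hx1 : ‖x‖ = 1) : ‖f x‖ ≤ opNormW f (stdCone n) :=
  le_csSup (opNormW_bddAbove hf) ⟨x, ⟨hx, hx1⟩, rfl⟩


lemma id_mem_famPow {A : Set ((Fin n → ℝ) → Fin n → ℝ)} : id ∈ famPow A 0 := by
  rw [famPow]; exact rfl

/-- Key consequence of irreducibility: from any `i` one can reach any `k`. -/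
lemma reach {A : Set ((Fin n → ℝ) → Fin n → ℝ)} (hA : ∀ f ∈ A, Good n f)
    (hirr : IrreducibleFam A) (i k : Fin n) :
    ∃ m, ∃ g ∈ famPow A m, 0 < g (ee n i) k := by
  set J : Set (Fin n) := {k | ∃ m, ∃ g ∈ famPow A m, 0 < g (ee n i) k} with hJ
  by_contra hk
  have hkJ : k ∉ J := hk
  have hiJ : i ∈ J := ⟨0, id, id_mem_famPow, by simp [ee, Pi.single_eq_same]⟩
  -- key: if j ∈ J and f ∈ A and l ∉ J then f (ee n j) l = 0
  have hface : ∀ j ∈ J, ∀ f ∈ A, ∀ l, l ∉ J → f (ee n j) l = 0 := by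
    rintro j ⟨m, g, hg, hpos⟩ f hf l hl
    have hgood := good_pow hA m g hg
    have hfg : f ∘ g ∈ famPow A (m + 1) := ⟨f, hf, g, hg, rfl⟩
    have hgei : g (ee n i) ∈ stdCone n := hgood.1 (ee_mem i)
    set δ : ℝ := g (ee n i) j with hδ
    have hδpos : 0 < δ := hpos
    have hle : ∀ t, (δ • ee n j) t ≤ g (ee n i) t := by
      intro t
      by_cases h : t = j
      · subst h
        have h1 : ee n t t = 1 := by simp [ee]
        simp only [Pi.smul_apply, smul_eq_mul, h1, mul_one]
        exact hδ.le
      · simp only [Pi.smul_apply, ee, Pi.single_apply, if_neg h, smul_eq_mul, mul_zero,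
          Pi.single_eq_of_ne h]
        exact hgei t
    have hmono := (hA f hf).2.2.1 _ (cone_smul hδpos.le (ee_mem j)) _ hgei hle l
    rw [good_smul (hA f hf) hδpos.le (ee_mem j), Pi.smul_apply, smul_eq_mul] at hmono
    -- (f ∘ g)(e_i) l = 0 since l ∉ J
    have hzero : f (g (ee n i)) l = 0 := by
      have h1 : ¬ 0 < (f ∘ g) (ee n i) l := fun hc => hl ⟨m + 1, f ∘ g, hfg, hc⟩
      have h2 : 0 ≤ f (g (ee n i)) l := (hA f hf).1 hgei l
      exact le_antisymm (not_lt.1 h1) h2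
    rw [hzero] at hmono
    have h3 : 0 ≤ f (ee n j) l := ((hA f hf).1 (ee_mem j)) l
    nlinarith
  apply hirr
  refine ⟨J, ⟨i, hiJ⟩, fun h => hkJ (h ▸ mem_univ k), ?_⟩
  intro f hf x hx
  refine ⟨fun l => (hA f hf).1 hx.1 l, ?_⟩
  intro l hl
  have hb := sum_bound (hA f hf) hx.1 l
  have hzero : ∀ j, x j * f (ee n j) l = 0 := by
    intro j
    by_cases hj : j ∈ J
    · rw [hface j hj f hf l hl, mul_zero]
    · rw [hx.2 j hj, zero_mul]
  rw [Finset.sum_congr rfl (fun j _ => hzero j), Finset.sum_const_zero] at hb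
  exact le_antisymm hb ((hA f hf).1 hx.1 l)


lemma csr_nonneg (f : (Fin n → ℝ) → Fin n → ℝ) (W : Set (Fin n → ℝ)) :
    0 ≤ coneSpecRad f W :=
  Real.iInf_nonneg fun k => Real.rpow_nonneg (opNormW_nonneg _ _) _

lemma csr_le_opNorm (f : (Fin n → ℝ) → Fin n → ℝ) (W : Set (Fin n → ℝ)) :
    coneSpecRad f W ≤ opNormW f W := by
  have h := ciInf_le (f := fun k : ℕ+ => (opNormW (f^[(k : ℕ)]) W) ^ (((k : ℕ) : ℝ)⁻¹))
    ⟨0, by rintro y ⟨k, rfl⟩; exact Real.rpow_nonneg (opNormW_nonneg _ _) _⟩ 1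
  simpa [coneSpecRad] using h

/-- Growth bound for compositions. -/
lemma pow_norm_bound {A : Set ((Fin n → ℝ) → Fin n → ℝ)} {C : ℝ}
    (hC : ∀ f ∈ A, ∀ x ∈ stdCone n, ‖f x‖ ≤ C * ‖x‖) (hA : ∀ f ∈ A, Good n f) :
    ∀ m, ∀ f ∈ famPow A m, ∀ x ∈ stdCone n, ‖f x‖ ≤ (max C 1) ^ m * ‖x‖ := by
  intro m
  induction m with
  | zero =>
    intro f hf x hx
    rw [famPow] at hf; simp at hf; subst hf; simp
  | succ m ih =>
    rintro f ⟨p, hp, q, hq, rfl⟩ x hx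
    have hqx : q x ∈ stdCone n := (good_pow hA m q hq).1 hx
    calc ‖p (q x)‖ ≤ C * ‖q x‖ := hC p hp _ hqx
      _ ≤ max C 1 * ((max C 1) ^ m * ‖x‖) := by
          have := ih q hq x hx
          have h1 : 0 ≤ max C 1 := le_trans zero_le_one (le_max_right _ _)
          nlinarith [norm_nonneg (q x), le_max_left C 1, norm_nonneg x,
            pow_nonneg h1 m]
      _ = (max C 1) ^ (m + 1) * ‖x‖ := by ring

/-- If h(e_i) ≥ 2 e_i then the iterates blow up: coneSpecRad h ≥ 2. -/
lemma csr_ge_two (hn : 0 < n) {h : (Fin n → ℝ) → Fin n → ℝ} (hh : Good n h) (i : Fin n)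
    (hge : ∀ t, (2 : ℝ) * ee n i t ≤ h (ee n i) t) :
    (2 : ℝ) ≤ coneSpecRad h (stdCone n) := by
  have key : ∀ k : ℕ, ∀ t, (2 : ℝ) ^ k * ee n i t ≤ h^[k] (ee n i) t := by
    intro k
    induction k with
    | zero => intro t; simp
    | succ k ih =>
      intro t
      have hgood := good_iterate hh k
      have hmem : h^[k] (ee n i) ∈ stdCone n := hgood.1 (ee_mem i)
      have h2k : (0:ℝ) ≤ 2 ^ k := by positivity
      have hle : ∀ s, ((2:ℝ)^k • ee n i) s ≤ h^[k] (ee n i) s := by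
        intro s
        simpa [Pi.smul_apply, smul_eq_mul] using ih s
      have hmono := hh.2.2.1 _ (cone_smul h2k (ee_mem i)) _ hmem hle t
      rw [good_smul hh h2k (ee_mem i), Pi.smul_apply, smul_eq_mul] at hmono
      rw [Function.iterate_succ_apply']
      calc (2:ℝ) ^ (k+1) * ee n i t = 2 ^ k * (2 * ee n i t) := by ring
        _ ≤ 2 ^ k * h (ee n i) t := by
            have := hge t
            nlinarith
        _ ≤ h (h^[k] (ee n i)) t := hmono
  refine le_ciInf fun k => ?_
  have hnorm : (2:ℝ) ^ (k:ℕ) ≤ ‖h^[(k:ℕ)] (ee n i)‖ := by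
    calc (2:ℝ) ^ (k:ℕ) = 2 ^ (k:ℕ) * ee n i i := by simp [ee, Pi.single_eq_same]
      _ ≤ h^[(k:ℕ)] (ee n i) i := key k i
      _ ≤ ‖h^[(k:ℕ)] (ee n i)‖ := coord_le_norm _ i
  have hop : (2:ℝ) ^ (k:ℕ) ≤ opNormW (h^[(k:ℕ)]) (stdCone n) :=
    hnorm.trans (le_opNormW (good_iterate hh _) (ee_mem i) (norm_ee i))
  calc (2:ℝ) = ((2:ℝ) ^ (k:ℕ)) ^ (((k:ℕ):ℝ)⁻¹) := by
        rw [← Real.rpow_natCast 2 (k:ℕ), ← Real.rpow_mul (by norm_num),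
          mul_inv_cancel₀ (by exact_mod_cast k.ne_zero), Real.rpow_one]
    _ ≤ (opNormW (h^[(k:ℕ)]) (stdCone n)) ^ (((k:ℕ):ℝ)⁻¹) :=
        Real.rpow_le_rpow (by positivity) hop (by positivity)


lemma good_of_hyp {f : (Fin n → ℝ) → Fin n → ℝ}
    (h : HomogOn f (stdCone n) ∧ OrderPresOn f (stdCone n) ∧ SubaddOn f (stdCone n)) :
    Good n f := by
  obtain ⟨⟨hM, hH⟩, hO, hS⟩ := h
  refine ⟨hM, hH, ?_, ?_⟩
  · intro x hx y hy hle i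
    have h1 : y - x ∈ stdCone n := fun j => sub_nonneg.2 (hle j)
    have h2 := hO x hx y hy h1 i
    simpa [sub_nonneg] using h2
  · intro x hx y hy i
    have h2 := hS x hx y hy i
    simp only [Pi.sub_apply, Pi.add_apply] at h2
    linarith


end S10

open S10

theorem statement10 {n : ℕ} (A : Set ((Fin n → ℝ) → Fin n → ℝ))
    (hA : ∀ f ∈ A, HomogOn f (stdCone n) ∧ OrderPresOn f (stdCone n) ∧
      SubaddOn f (stdCone n))
    (hbdd : BoundedFamOn A (stdCone n))
    (hirr : IrreducibleFam A)
    (hr : genRad A (stdCone n) = 1) :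
    ∃ C : ℝ, ∀ m : ℕ, 0 < m → ∀ f ∈ famPow A m, ∀ x ∈ stdCone n, ‖f x‖ ≤ C * ‖x‖ := by
  rcases Nat.eq_zero_or_pos n with hn | hn'
  · subst hn
    refine ⟨0, fun m hm f hf x hx => ?_⟩
    have h1 : f x = 0 := Subsingleton.elim _ _
    rw [h1, norm_zero, zero_mul]
  have hA' : ∀ f ∈ A, Good n f := fun f hf => good_of_hyp (hA f hf)
  obtain ⟨C, hC⟩ := hbdd
  set D : ℝ := max C 1 with hD
  have hD1 : (1:ℝ) ≤ D := le_max_right _ _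
  have hD0 : (0:ℝ) ≤ D := zero_le_one.trans hD1
  -- it suffices to bound ‖f (uu n)‖
  suffices hsuff : ∃ B : ℝ, ∀ m : ℕ, 0 < m → ∀ f ∈ famPow A m, ‖f (uu n)‖ ≤ B by
    obtain ⟨B, hB⟩ := hsuff
    refine ⟨B, fun m hm f hf x hx => ?_⟩
    exact (bound_u (good_pow hA' m f hf) hx).trans
      (mul_le_mul_of_nonneg_right (hB m hm f hf) (norm_nonneg x))
  by_contra hcon
  push_neg at hcon
  -- reachability witnesses and a uniform positive lower bound δ0
  choose mg gg hgmem hgpos using fun i k => reach hA' hirr i k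
  have hFinNe : Nonempty (Fin n) := ⟨⟨0, hn'⟩⟩
  set δ0 : ℝ := Finset.univ.inf' Finset.univ_nonempty
    (fun p : Fin n × Fin n => gg p.1 p.2 (ee n p.1) p.2) with hδ0
  have hδ0pos : 0 < δ0 := by
    rw [hδ0, Finset.lt_inf'_iff]
    exact fun b _ => hgpos b.1 b.2
  have hδ0le : ∀ i k, δ0 ≤ gg i k (ee n i) k := fun i k =>
    Finset.inf'_le _ (Finset.mem_univ (i, k))
  -- get f with huge ‖f (uu n)‖
  set B : ℝ := (n : ℝ) * (2 / δ0) with hBdef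
  have hB0 : 0 ≤ B := by positivity
  obtain ⟨m, hm, f, hf, hfB⟩ := hcon B
  have hfgood : Good n f := good_pow hA' m f hf
  have hfu : f (uu n) ∈ stdCone n := hfgood.1 uu_mem
  -- a coordinate i with B < f (uu n) i
  have hex_i : ∃ i, B < f (uu n) i := by
    by_contra hno
    push_neg at hno
    exact absurd (norm_le_of_cone hfu hB0 hno) (not_le.2 hfB)
  obtain ⟨i, hi⟩ := hex_i
  -- a coordinate j with 2/δ0 ≤ f (ee n j) i
  have hex_j : ∃ j, 2 / δ0 ≤ f (ee n j) i := by
    by_contra hno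
    push_neg at hno
    have h1 : f (uu n) i ≤ ∑ j, uu n j * f (ee n j) i := sum_bound hfgood uu_mem i
    have h2 : ∑ j, uu n j * f (ee n j) i ≤ (n : ℝ) * (2 / δ0) := by
      calc ∑ j, uu n j * f (ee n j) i = ∑ j : Fin n, f (ee n j) i := by
            simp [uu]
        _ ≤ (Finset.univ : Finset (Fin n)).card • (2 / δ0) :=
            Finset.sum_le_card_nsmul _ _ _ (fun j _ => (hno j).le)
        _ = (n : ℝ) * (2 / δ0) := by
            simp [nsmul_eq_mul]
    have := h1.trans h2
    rw [hBdef] at hi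
    linarith
  obtain ⟨j, hj⟩ := hex_j
  -- assemble h = f ∘ g with h (ee n i) ≥ 2 • ee n i
  set g := gg i j with hgdef
  have hggood : Good n g := good_pow hA' (mg i j) g (hgmem i j)
  have hgei : g (ee n i) ∈ stdCone n := hggood.1 (ee_mem i)
  set δ : ℝ := g (ee n i) j with hδdef
  have hδpos : 0 < δ := hgpos i j
  set h := f ∘ g with hhdef
  have hhgood : Good n h := good_comp hfgood hggood
  have hhmem : h ∈ famPow A (m + mg i j) := comp_mem m (mg i j) f g hf (hgmem i j)
  have hge : ∀ t, (2 : ℝ) * ee n i t ≤ h (ee n i) t := by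
    have hle : ∀ t, (δ • ee n j) t ≤ g (ee n i) t := by
      intro t
      by_cases ht : t = j
      · subst ht
        have h1 : ee n t t = 1 := by simp [ee]
        simp only [Pi.smul_apply, smul_eq_mul, h1, mul_one]
        exact le_of_eq rfl
      · simp only [Pi.smul_apply, smul_eq_mul, ee, Pi.single_eq_of_ne ht, mul_zero]
        exact hgei t
    have hmono := hfgood.2.2.1 _ (cone_smul hδpos.le (ee_mem j)) _ hgei hle
    intro t
    by_cases ht : t = i
    · subst ht
      have h1 : ee n t t = 1 := by simp [ee]
      rw [h1, mul_one]
      have h2 := hmono t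
      rw [good_smul hfgood hδpos.le (ee_mem j), Pi.smul_apply, smul_eq_mul] at h2
      have h3 : (2:ℝ) ≤ δ * f (ee n j) t := by
        have h4 : δ0 * (2 / δ0) ≤ δ * f (ee n j) t :=
          mul_le_mul (hδ0le t j) hj (by positivity) hδpos.le
        rwa [mul_div_cancel₀ _ hδ0pos.ne'] at h4
      calc (2:ℝ) ≤ δ * f (ee n j) t := h3
        _ ≤ f (g (ee n t)) t := h2
        _ = h (ee n t) t := rfl
    · have h1 : ee n i t = 0 := by simp [ee, Pi.single_eq_of_ne ht]
      rw [h1, mul_zero]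
      exact hhgood.1 (ee_mem i) t
  -- spectral radius of h is ≥ 2, contradiction with genRad = 1
  have hcsr : (2:ℝ) ≤ coneSpecRad h (stdCone n) := csr_ge_two hn' hhgood i hge
  set N : ℕ := m + mg i j with hNdef
  have hNpos : 0 < N := by omega
  -- every element of the genTerm image is ≤ D
  have helt : ∀ M : ℕ, M ≠ 0 → ∀ f' ∈ famPow A M,
      (coneSpecRad f' (stdCone n)) ^ ((M:ℝ)⁻¹) ≤ D := by
    intro M hM f' hf'
    have hgood' := good_pow hA' M f' hf'
    have h1 : coneSpecRad f' (stdCone n) ≤ D ^ M := by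
      refine (csr_le_opNorm f' _).trans ((opNormW_le hgood').trans ?_)
      have h2 := pow_norm_bound hC hA' M f' hf' (uu n) uu_mem
      rwa [norm_uu hn', mul_one] at h2
    calc (coneSpecRad f' (stdCone n)) ^ ((M:ℝ)⁻¹) ≤ (D ^ M) ^ ((M:ℝ)⁻¹) :=
        Real.rpow_le_rpow (csr_nonneg _ _) h1 (by positivity)
      _ = D := by
          rw [← Real.rpow_natCast D M, ← Real.rpow_mul hD0,
            mul_inv_cancel₀ (Nat.cast_ne_zero.2 hM), Real.rpow_one]
  have hterm_le : ∀ M : ℕ, M ≠ 0 → genTerm A (stdCone n) M ≤ D := by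
    intro M hM
    refine Real.sSup_le ?_ hD0
    rintro y ⟨f', hf', rfl⟩
    exact helt M hM f' hf'
  -- genTerm N > 1
  have hgt : 1 < genTerm A (stdCone n) N := by
    have hmem : (coneSpecRad h (stdCone n)) ^ ((N:ℝ)⁻¹) ∈
        ((fun f' => (coneSpecRad f' (stdCone n)) ^ ((N:ℝ)⁻¹)) '' famPow A N) :=
      ⟨h, hhmem, rfl⟩
    have hbddA : BddAbove ((fun f' => (coneSpecRad f' (stdCone n)) ^ ((N:ℝ)⁻¹)) ''
        famPow A N) := ⟨D, by rintro y ⟨f', hf', rfl⟩; exact helt N hNpos.ne' f' hf'⟩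
    have h1 : (2:ℝ) ^ ((N:ℝ)⁻¹) ≤ (coneSpecRad h (stdCone n)) ^ ((N:ℝ)⁻¹) :=
      Real.rpow_le_rpow (by norm_num) hcsr (by positivity)
    have h2 : (1:ℝ) < (2:ℝ) ^ ((N:ℝ)⁻¹) := by
      rw [Real.one_lt_rpow_iff_of_pos (by norm_num)]
      exact Or.inl ⟨one_lt_two, by positivity⟩
    exact lt_of_lt_of_le (h2.trans_le h1) (le_csSup hbddA hmem)
  -- contradiction with genRad = 1
  have hrange : BddAbove (Set.range fun M : ℕ+ => genTerm A (stdCone n) (M : ℕ)) :=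
    ⟨D, by rintro y ⟨M, rfl⟩; exact hterm_le (M : ℕ) M.ne_zero⟩
  have hle : genTerm A (stdCone n) ((⟨N, hNpos⟩ : ℕ+) : ℕ) ≤ genRad A (stdCone n) :=
    le_ciSup hrange (⟨N, hNpos⟩ : ℕ+)
  rw [hr] at hle
  simp only [PNat.mk_ofNat] at hle
  exact absurd hle (not_le.2 hgt)
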